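/- Let T > 0 and let f : [0,T] → ℝ be continuous. Define B_f(t) = ∫_t^T exp(−∫_t^u f(s) ds) du for 0 ≤ t ≤ T. Then for every t ∈ [0,T), ∫_0^t 1/B_f(s) ds = log(B_f(0)/B_f(t)) + ∫_0^t f(s) ds, and consequently ∫_0^T 1/B_f(s) ds = ∞ (i.e., lim_{t→T⁻} ∫_0^t 1/B_f(s) ds = ∞). -/

import Mathlib

open Set Filter intervalIntegral

/-- The annuity value `B_f(t) = ∫_t^T exp(−∫_t^u f(s) ds) du`. -/
noncomputable def Bann (T : ℝ) (f : ℝ → ℝ) (t : ℝ) : ℝ :=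
  ∫ u in t..T, Real.exp (-∫ s in t..u, f s)

/-- For continuous `f : [0,T] → ℝ` and every `t ∈ [0,T)`,
`∫_0^t 1/B_f(s) ds = log(B_f(0)/B_f(t)) + ∫_0^t f(s) ds`, and consequently
`∫_0^t 1/B_f(s) ds → ∞` as `t → T⁻`. -/
theorem Bann_inv_integral (T : ℝ) (hT : 0 < T) (f : ℝ → ℝ)
    (hf : ContinuousOn f (Icc 0 T)) :
    (∀ t ∈ Ico (0 : ℝ) T,
      ∫ s in (0 : ℝ)..t, 1 / Bann T f s
        = Real.log (Bann T f 0 / Bann T f t) + ∫ s in (0 : ℝ)..t, f s) ∧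
    Tendsto (fun t => ∫ s in (0 : ℝ)..t, 1 / Bann T f s)
      (nhdsWithin T (Iio T)) atTop := by
  -- continuous extension of `f`
  set g : ℝ → ℝ := IccExtend hT.le ((Icc (0:ℝ) T).restrict f) with hg_def
  have hg : Continuous g := continuous_IccExtend_iff.mpr hf.restrict
  have hgf : EqOn g f (Icc 0 T) := fun x hx => by
    simp [hg_def, IccExtend_of_mem _ _ hx]; rfl
  -- primitive of g
  set F : ℝ → ℝ := fun t => ∫ s in (0:ℝ)..t, g s with hF_def
  have hF : ∀ t, HasDerivAt F (g t) t := fun t =>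
    integral_hasDerivAt_right (hg.intervalIntegrable _ _)
      (hg.stronglyMeasurable.stronglyMeasurableAtFilter) hg.continuousAt
  have hFc : Continuous F := continuous_iff_continuousAt.mpr fun t => (hF t).continuousAt
  set h : ℝ → ℝ := fun u => Real.exp (-F u) with hh_def
  have hh : Continuous h := Real.continuous_exp.comp hFc.neg
  set G : ℝ → ℝ := fun t => ∫ u in t..T, h u with hG_def
  have hGalt : ∀ t, G t = (∫ u in (0:ℝ)..T, h u) - ∫ u in (0:ℝ)..t, h u := fun t =>
    (integral_interval_sub_left (hh.intervalIntegrable _ _) (hh.intervalIntegrable _ _)).symm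
  have hG : ∀ t, HasDerivAt G (-(h t)) t := by
    intro t
    have : HasDerivAt (fun t => (∫ u in (0:ℝ)..T, h u) - ∫ u in (0:ℝ)..t, h u) (0 - h t) t :=
      (hasDerivAt_const t _).sub (integral_hasDerivAt_right (hh.intervalIntegrable _ _)
        (hh.stronglyMeasurable.stronglyMeasurableAtFilter) hh.continuousAt)
    have hGfun : G = fun t => (∫ u in (0:ℝ)..T, h u) - ∫ u in (0:ℝ)..t, h u := funext hGalt
    rw [hGfun]
    simpa using this
  have hGc : Continuous G := continuous_iff_continuousAt.mpr fun t => (hG t).continuousAt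
  have hGpos : ∀ t < T, 0 < G t := fun t ht =>
    intervalIntegral_pos_of_pos_on (hh.intervalIntegrable t T)
      (fun x _ => Real.exp_pos _) ht
  -- Bann = exp(F t) * G t on [0,T]
  have hBann : ∀ t ∈ Icc (0:ℝ) T, Bann T f t = Real.exp (F t) * G t := by
    intro t ht
    have h1 : ∀ u ∈ uIcc t T, Real.exp (-∫ s in t..u, f s) = Real.exp (F t) * h u := by
      intro u hu
      rw [uIcc_of_le ht.2] at hu
      have hsub : uIcc t u ⊆ Icc 0 T := by
        rw [uIcc_of_le hu.1]
        exact Icc_subset_Icc ht.1 hu.2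
      have : (∫ s in t..u, f s) = ∫ s in t..u, g s :=
        (integral_congr (fun s hs => (hgf (hsub hs)).symm))
      rw [this, (integral_interval_sub_left (hg.intervalIntegrable 0 u)
        (hg.intervalIntegrable 0 t)).symm]
      show Real.exp (-(F u - F t)) = Real.exp (F t) * Real.exp (-F u)
      rw [← Real.exp_add]; ring_nf
    rw [Bann, integral_congr h1, integral_const_mul]
  -- the key formula
  have key : ∀ t ∈ Ico (0:ℝ) T,
      (∫ s in (0:ℝ)..t, 1 / Bann T f s) = Real.log (G 0) - Real.log (G t) := by
    intro t ht
    have huIcc : uIcc (0:ℝ) t = Icc 0 t := uIcc_of_le ht.1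
    have hsubT : Icc (0:ℝ) t ⊆ Icc 0 T := Icc_subset_Icc le_rfl ht.2.le
    have hcongr : ∀ s ∈ uIcc (0:ℝ) t, 1 / Bann T f s = h s / G s := by
      intro s hs
      rw [huIcc] at hs
      have hGs : 0 < G s := hGpos s (lt_of_le_of_lt hs.2 ht.2)
      rw [hBann s (hsubT hs)]
      show 1 / (Real.exp (F s) * G s) = Real.exp (-F s) / G s
      rw [Real.exp_neg]
      field_simp
    rw [integral_congr hcongr]
    have hderiv : ∀ s ∈ uIcc (0:ℝ) t,
        HasDerivAt (fun s => -Real.log (G s)) (h s / G s) s := by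
      intro s hs
      rw [huIcc] at hs
      have hGs : 0 < G s := hGpos s (lt_of_le_of_lt hs.2 ht.2)
      have : HasDerivAt (fun s => Real.log (G s)) ((G s)⁻¹ * -(h s)) s :=
        (Real.hasDerivAt_log hGs.ne').comp s (hG s)
      have := this.neg
      exact this.congr_deriv (by ring)
    have hint : IntervalIntegrable (fun s => h s / G s) MeasureTheory.volume 0 t := by
      apply ContinuousOn.intervalIntegrable
      apply hh.continuousOn.div hGc.continuousOn
      intro s hs
      rw [huIcc] at hs
      exact (hGpos s (lt_of_le_of_lt hs.2 ht.2)).ne'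
    rw [integral_eq_sub_of_hasDerivAt hderiv hint]
    ring
  constructor
  · intro t ht
    have hF0 : F t = ∫ s in (0:ℝ)..t, f s :=
      integral_congr (fun s hs => hgf ((Icc_subset_Icc le_rfl ht.2.le)
        ((uIcc_of_le ht.1) ▸ hs)))
    have hB0 : Bann T f 0 = G 0 := by
      rw [hBann 0 ⟨le_rfl, hT.le⟩]
      simp [hF_def, integral_same]
    have hBt : Bann T f t = Real.exp (F t) * G t := hBann t ⟨ht.1, ht.2.le⟩
    have hG0 : 0 < G 0 := hGpos 0 hT
    have hGt : 0 < G t := hGpos t ht.2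
    rw [key t ht, hB0, hBt, ← hF0]
    rw [Real.log_div hG0.ne' (by positivity), Real.log_mul (Real.exp_ne_zero _) hGt.ne',
      Real.log_exp]
    ring
  · -- Tendsto
    have hGT : Tendsto G (nhdsWithin T (Iio T)) (nhdsWithin 0 (Ioi 0)) := by
      rw [tendsto_nhdsWithin_iff]
      constructor
      · have : Tendsto G (nhds T) (nhds (G T)) := hGc.tendsto T
        have hGT0 : G T = 0 := by simp [hG_def, integral_same]
        rw [hGT0] at this
        exact this.mono_left nhdsWithin_le_nhds
      · exact eventually_nhdsWithin_of_forall (fun t ht => hGpos t ht)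
    have hlog : Tendsto (fun t => Real.log (G t)) (nhdsWithin T (Iio T)) atBot :=
      Real.tendsto_log_nhdsGT_zero.comp hGT
    have hneg : Tendsto (fun t => -Real.log (G t)) (nhdsWithin T (Iio T)) atTop :=
      tendsto_neg_atBot_atTop.comp hlog
    have hfin : Tendsto (fun t => Real.log (G 0) - Real.log (G t))
        (nhdsWithin T (Iio T)) atTop :=
      (tendsto_atTop_add_const_left _ (Real.log (G 0)) hneg).congr fun t => by ring
    apply hfin.congr'
    have h1 : ∀ᶠ t in nhdsWithin T (Iio T), 0 < t :=
      eventually_nhdsWithin_of_eventually_nhds (eventually_gt_nhds hT)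
    filter_upwards [h1, self_mem_nhdsWithin] with t h0 hlt
    exact (key t ⟨h0.le, hlt⟩).symm
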